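/- Minimax rate for iterate-averaged 3DVAR in the diagonal case (first regime): under the diagonal setup, fix γ > 0, suppose Σ_{i=1}^∞ i^{2β} v_{0,i}² < ∞, and assume τ̄_b := (t(1+2ε) + 2β)/(2(1 + 2ε + 2p)) ≤ 1 and τ̄_v := (t(1+2ε) + 2ε)/(1 + 2ε + 2p) ≤ 1. Then there exists a constant C > 0, independent of θ and n, such that for every θ ∈ (0,1] and every n ≥ 1, taking α = θ^{−(1 + 2p + 2ε)/(1 + 2p + 2β + θ(t(1+2ε) + 2ε))} · n^{(2β − 2ε + θ(t(1+2ε) + 2ε))/(1 + 2p + 2β + θ(t(1+2ε) + 2ε))}, one has B_n(α) + V_n(α) ≤ C θ^{−(2β + t(1+2ε))/(1 + 2p + 2β + θ(t(1+2ε) + 2ε))} · n^{−(t(1+2ε) + 2β)/(1 + 2p + 2β + θ(t(1+2ε) + 2ε))}. -/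

import Mathlib

open Finset

/-- `q_{n,α}(λ) = λ⁻¹ (1 − (α/(α+λ))^n)`. -/
noncomputable def qFun (n : ℕ) (α l : ℝ) : ℝ := l⁻¹ * (1 - (α / (α + l)) ^ n)

/-- Squared bias of iterate-averaged 3DVAR in the diagonal case (sequences are 1-based):
`B_n(α) = (α/n)² Σ_{i≥1} σ_i^t q_{n,α}(σ_i a_i²)² v_{0,i}²`. -/
noncomputable def Bterm (σ a v0 : ℕ → ℝ) (t : ℝ) (α : ℝ) (n : ℕ) : ℝ :=
  (α / (n : ℝ)) ^ 2 *
    ∑' i : ℕ, (σ (i + 1)) ^ t * (qFun n α (σ (i + 1) * (a (i + 1)) ^ 2)) ^ 2 * (v0 (i + 1)) ^ 2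

/-- Variance term of iterate-averaged 3DVAR in the diagonal case (sequences are 1-based):
`V_n(α) = (γ²/n²) Σ_{j=1}^n Σ_{i≥1} σ_i^{t+2} a_i² q_{j,α}(σ_i a_i²)²`. -/
noncomputable def Vterm (σ a : ℕ → ℝ) (t γ : ℝ) (α : ℝ) (n : ℕ) : ℝ :=
  (γ ^ 2 / (n : ℝ) ^ 2) *
    ∑ j ∈ Icc 1 n, ∑' i : ℕ,
      (σ (i + 1)) ^ (t + 2) * (a (i + 1)) ^ 2 * (qFun j α (σ (i + 1) * (a (i + 1)) ^ 2)) ^ 2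

set_option maxHeartbeats 1000000

section AuxHelpers

lemma one_sub_pow_le' (r : ℝ) (hr0 : 0 ≤ r) (hr1 : r ≤ 1) (n : ℕ) :
    1 - r ^ n ≤ (n : ℝ) * (1 - r) := by
  induction n with
  | zero => simp
  | succ n ih =>
    have hrn : r ^ n ≤ 1 := pow_le_one₀ hr0 hr1
    have h : 1 - r ^ (n+1) = (1 - r ^ n) + r ^ n * (1 - r) := by ring
    rw [h]; push_cast
    nlinarith [pow_nonneg hr0 n]

lemma rpow_tele (δ : ℝ) (hδ : 0 < δ) (y : ℝ) (hy : 1 ≤ y) :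
    (y + 1) ^ (-(1 + δ)) ≤ δ⁻¹ * (y ^ (-δ) - (y + 1) ^ (-δ)) := by
  have hy0 : 0 < y := by linarith
  have hy1 : 0 < y + 1 := by linarith
  have hlog : 1 / (y + 1) ≤ Real.log ((y + 1) / y) := by
    have h1 : Real.log (y / (y + 1)) ≤ y / (y + 1) - 1 :=
      Real.log_le_sub_one_of_pos (by positivity)
    have h2 : Real.log ((y + 1) / y) = - Real.log (y / (y + 1)) := by
      rw [← Real.log_inv]; congr 1; field_simp
    have h3 : y / (y + 1) - 1 = -(1 / (y + 1)) := by field_simp; ring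
    rw [h2]; linarith [h1]
  have hkey : 1 + δ / (y + 1) ≤ ((y + 1) / y) ^ δ := by
    rw [Real.rpow_def_of_pos (by positivity)]
    have h3 : δ * (1 / (y + 1)) ≤ δ * Real.log ((y + 1) / y) :=
      mul_le_mul_of_nonneg_left hlog hδ.le
    calc 1 + δ / (y + 1) = δ * (1 / (y+1)) + 1 := by ring
    _ ≤ Real.log ((y + 1) / y) * δ + 1 := by linarith
    _ ≤ Real.exp (Real.log ((y + 1) / y) * δ) := Real.add_one_le_exp _
  have hpos : (0:ℝ) < (y + 1) ^ (-δ) := Real.rpow_pos_of_pos hy1 _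
  have hy1δ : (0:ℝ) < (y + 1) ^ δ := Real.rpow_pos_of_pos hy1 _
  have hyδ : (0:ℝ) < y ^ δ := Real.rpow_pos_of_pos hy0 _
  have hmul : (1 + δ / (y + 1)) * (y + 1) ^ (-δ) ≤ y ^ (-δ) := by
    calc (1 + δ / (y + 1)) * (y + 1) ^ (-δ)
        ≤ ((y + 1) / y) ^ δ * (y + 1) ^ (-δ) :=
          mul_le_mul_of_nonneg_right hkey hpos.le
    _ = y ^ (-δ) := by
          rw [Real.div_rpow hy1.le hy0.le, Real.rpow_neg hy1.le, Real.rpow_neg hy0.le]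
          field_simp
  -- now: (y+1)^{-(1+δ)} = (y+1)^{-δ}/(y+1)
  have hsplit : (y + 1) ^ (-(1 + δ)) = (y + 1) ^ (-δ) / (y + 1) := by
    rw [show -(1+δ) = -δ + (-1) by ring, Real.rpow_add hy1, Real.rpow_neg_one]
    ring
  rw [hsplit]
  rw [inv_mul_eq_div, le_div_iff₀ hδ]
  have := hmul
  -- δ * ((y+1)^{-δ}/(y+1)) ≤ y^{-δ} - (y+1)^{-δ}
  have expand : (1 + δ / (y + 1)) * (y + 1) ^ (-δ)
      = (y + 1) ^ (-δ) + δ * ((y + 1) ^ (-δ)) / (y + 1) := by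
    field_simp
  rw [expand] at this
  have : δ * ((y + 1) ^ (-δ)) / (y + 1) ≤ y ^ (-δ) - (y + 1) ^ (-δ) := by linarith
  calc (y + 1) ^ (-δ) / (y + 1) * δ = δ * ((y + 1) ^ (-δ)) / (y + 1) := by ring
  _ ≤ _ := this

-- zeta bound
lemma zeta_partial (δ : ℝ) (hδ : 0 < δ) (n : ℕ) :
    ∑ i ∈ Finset.range n, ((i : ℝ) + 1) ^ (-(1 + δ)) ≤ 1 + δ⁻¹ := by
  induction' n with n _
  · simp; positivity
  rcases Nat.eq_zero_or_pos n with rfl | hn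
  · norm_num
    linarith
  -- general: sum_{i<n+1} = f 0 + sum_{i<n} f (i+1)
  rw [Finset.sum_range_succ']
  have h0 : ((0:ℕ):ℝ) + 1 = 1 := by norm_num
  rw [h0, Real.one_rpow]
  have htel : ∑ i ∈ Finset.range n, (((i+1:ℕ) : ℝ) + 1) ^ (-(1 + δ))
      ≤ δ⁻¹ * (1 - ((n:ℝ) + 1) ^ (-δ)) := by
    have : ∀ i ∈ Finset.range n, (((i+1:ℕ) : ℝ) + 1) ^ (-(1 + δ))
        ≤ δ⁻¹ * (((i:ℝ)+1) ^ (-δ) - (((i:ℝ)+1) + 1) ^ (-δ)) := by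
      intro i _
      have := rpow_tele δ hδ ((i:ℝ)+1) (by push_cast; linarith [Nat.cast_nonneg (α := ℝ) i])
      push_cast
      convert this using 3 <;> push_cast <;> ring
    calc ∑ i ∈ Finset.range n, (((i+1:ℕ) : ℝ) + 1) ^ (-(1 + δ))
        ≤ ∑ i ∈ Finset.range n, δ⁻¹ * (((i:ℝ)+1) ^ (-δ) - (((i:ℝ)+1) + 1) ^ (-δ)) :=
          Finset.sum_le_sum this
    _ = δ⁻¹ * ∑ i ∈ Finset.range n, ((((i:ℝ)+1)) ^ (-δ) - (((i:ℝ)+2)) ^ (-δ)) := by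
          rw [Finset.mul_sum]; apply Finset.sum_congr rfl; intro i _; ring_nf
    _ = δ⁻¹ * (1 - ((n:ℝ) + 1) ^ (-δ)) := by
          congr 1
          have htl := Finset.sum_range_sub' (f := fun i => (((i:ℝ)+1)) ^ (-δ)) n
          rw [show ∑ i ∈ Finset.range n, ((((i:ℝ)+1)) ^ (-δ) - (((i:ℝ)+2)) ^ (-δ))
              = ∑ i ∈ Finset.range n, ((fun i : ℕ => (((i:ℝ)+1)) ^ (-δ)) i - (fun i : ℕ => (((i:ℝ)+1)) ^ (-δ)) (i+1)) by
            apply Finset.sum_congr rfl; intro i _; push_cast; ring_nf, htl]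
          norm_num
  have hnn : (0:ℝ) ≤ ((n:ℝ)+1) ^ (-δ) := by positivity
  have h2 : δ⁻¹ * (1 - ((n:ℝ) + 1) ^ (-δ)) ≤ δ⁻¹ := by
    have : 1 - ((n:ℝ)+1) ^ (-δ) ≤ 1 := by linarith
    have hi : 0 ≤ δ⁻¹ := by positivity
    nlinarith
  linarith

lemma zeta_summable (δ : ℝ) (hδ : 0 < δ) :
    Summable (fun i : ℕ => ((i : ℝ) + 1) ^ (-(1 + δ))) :=
  summable_of_sum_range_le (fun n => by positivity) (zeta_partial δ hδ)

lemma zeta_tsum_le (δ : ℝ) (hδ : 0 < δ) :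
    ∑' i : ℕ, ((i : ℝ) + 1) ^ (-(1 + δ)) ≤ 1 + δ⁻¹ :=
  Real.tsum_le_of_sum_range_le (fun n => by positivity) (zeta_partial δ hδ)

-- min-power interpolation: for x > 0 and 0 ≤ κ ≤ 2, (min x 1)² ≤ x ^ κ
lemma minpow (x κ : ℝ) (hx : 0 < x) (hκ0 : 0 ≤ κ) (hκ2 : κ ≤ 2) :
    (min x 1) ^ 2 ≤ x ^ κ := by
  rcases le_total 1 x with h | h
  · have h1 : min x 1 = 1 := min_eq_right h
    rw [h1, one_pow]
    exact Real.one_le_rpow h hκ0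
  · have h1 : min x 1 = x := min_eq_left h
    rw [h1]
    have : x ^ (2:ℕ) = x ^ ((2:ℕ) : ℝ) := (Real.rpow_natCast x 2).symm
    rw [this]
    exact Real.rpow_le_rpow_of_exponent_ge hx h (by exact_mod_cast hκ2)

-- bounds on qFun (will inline qFun def below in the main file)



lemma one_sub_pow_le'' (r : ℝ) (hr0 : 0 ≤ r) (hr1 : r ≤ 1) (n : ℕ) :
    1 - r ^ n ≤ (n : ℝ) * (1 - r) := by
  induction n with
  | zero => simp
  | succ n ih =>
    have hrn : r ^ n ≤ 1 := pow_le_one₀ hr0 hr1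
    have h : 1 - r ^ (n+1) = (1 - r ^ n) + r ^ n * (1 - r) := by ring
    rw [h]; push_cast
    nlinarith [pow_nonneg hr0 n]

section q
variable {n : ℕ} {α l : ℝ} (hα : 0 < α) (hl : 0 < l)
include hα hl

lemma r_mem : 0 ≤ α / (α + l) ∧ α / (α + l) ≤ 1 := by
  constructor
  · positivity
  · rw [div_le_one (by linarith)]; linarith

lemma qFun_mul : l * qFun n α l = 1 - (α / (α + l)) ^ n := by
  rw [qFun]; field_simp

lemma qFun_nonneg : 0 ≤ qFun n α l := by
  obtain ⟨h0, h1⟩ := r_mem hα hl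
  have := pow_le_one₀ h0 h1 (n := n)
  rw [qFun]
  have : 0 ≤ 1 - (α / (α + l)) ^ n := by linarith
  positivity

lemma qFun_mul_le_one : l * qFun n α l ≤ 1 := by
  obtain ⟨h0, h1⟩ := r_mem hα hl
  rw [qFun_mul hα hl]
  have := pow_nonneg h0 n
  linarith

lemma qFun_mul_le_n : l * qFun n α l ≤ (n : ℝ) * l / α := by
  obtain ⟨h0, h1⟩ := r_mem hα hl
  rw [qFun_mul hα hl]
  have h2 : 1 - α / (α + l) = l / (α + l) := by field_simp; ring
  calc 1 - (α / (α + l)) ^ n ≤ (n : ℝ) * (1 - α / (α + l)) :=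
        one_sub_pow_le'' _ h0 h1 n
  _ = (n : ℝ) * l / (α + l) := by rw [h2]; ring
  _ ≤ (n : ℝ) * l / α := by
        apply div_le_div_of_nonneg_left (by positivity) hα (by linarith)

end q

lemma cpow_bound (c : ℝ) (hc : 0 < c) (u lo hi : ℝ) (h1 : lo ≤ u) (h2 : u ≤ hi) :
    c ^ u ≤ c ^ lo + c ^ hi := by
  rcases le_total c 1 with h | h
  · have : c ^ u ≤ c ^ lo := Real.rpow_le_rpow_of_exponent_ge hc h h1
    have hpos : (0:ℝ) ≤ c ^ hi := by positivity
    linarith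
  · have : c ^ u ≤ c ^ hi := Real.rpow_le_rpow_of_exponent_le h h2
    have hpos : (0:ℝ) ≤ c ^ lo := by positivity
    linarith

lemma bias_bound (ε p t β : ℝ) (hε : 0 < ε) (hp : 0 < p) (ht : 0 ≤ t) (hβ : 0 ≤ β)
    (σ a v0 : ℕ → ℝ) (c₁ c₂ : ℝ) (hc₁ : 0 < c₁) (hc₁₂ : c₁ ≤ c₂)
    (hσ : ∀ i : ℕ, 1 ≤ i → c₁ * (i : ℝ) ^ (-1 - 2 * ε) ≤ σ i ∧ σ i ≤ c₂ * (i : ℝ) ^ (-1 - 2 * ε))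
    (ha : ∀ i : ℕ, 1 ≤ i → c₁ * (i : ℝ) ^ (-p) ≤ a i ∧ a i ≤ c₂ * (i : ℝ) ^ (-p))
    (hv : Summable (fun i : ℕ => ((i : ℝ) + 1) ^ (2 * β) * (v0 (i + 1)) ^ 2))
    (ρ : ℝ) (hρ0 : 0 ≤ ρ) (hρ2 : ρ ≤ 2)
    (hρ : (1 + 2 * ε + 2 * p) * ρ = t * (1 + 2 * ε) + 2 * β)
    (α : ℝ) (hα : 0 < α) (n : ℕ) (hn : 1 ≤ n) :
    Bterm σ a v0 t α n ≤
      (c₂ ^ t * (c₁ ^ (-(6:ℝ)) + 1) *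
        ∑' i : ℕ, ((i : ℝ) + 1) ^ (2 * β) * (v0 (i + 1)) ^ 2) * (α / n) ^ ρ := by
  have hc₂ : 0 < c₂ := lt_of_lt_of_le hc₁ hc₁₂
  have hn0 : (0:ℝ) < n := by exact_mod_cast hn
  set W := ∑' i : ℕ, ((i : ℝ) + 1) ^ (2 * β) * (v0 (i + 1)) ^ 2 with hW
  set P := α / (n:ℝ) with hP
  have hP0 : 0 < P := by positivity
  set Cb := c₂ ^ t * (c₁ ^ (-(6:ℝ)) + 1) with hCb
  have hCb0 : 0 < Cb := by positivity
  set K := (P ^ 2)⁻¹ * (Cb * P ^ ρ) with hK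
  set w := fun i : ℕ => ((i : ℝ) + 1) ^ (2 * β) * (v0 (i + 1)) ^ 2 with hw
  set f := fun i : ℕ =>
    (σ (i + 1)) ^ t * (qFun n α (σ (i + 1) * (a (i + 1)) ^ 2)) ^ 2 * (v0 (i + 1)) ^ 2 with hf
  have key : ∀ i : ℕ, 0 ≤ f i ∧ f i ≤ K * w i := by
    intro i
    set k := ((i:ℝ) + 1) with hkdef
    have hk1 : (1:ℝ) ≤ k := by rw [hkdef]; have : (0:ℝ) ≤ (i:ℝ) := Nat.cast_nonneg i; linarith
    have hk0 : (0:ℝ) < k := by linarith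
    have hcast : ((i + 1 : ℕ) : ℝ) = k := by rw [hkdef]; push_cast; ring
    obtain ⟨hσl, hσu⟩ := hσ (i+1) (by omega)
    obtain ⟨hal, hau⟩ := ha (i+1) (by omega)
    rw [hcast] at hσl hσu hal hau
    have hσpos : 0 < σ (i+1) := lt_of_lt_of_le (by positivity) hσl
    have hapos : 0 < a (i+1) := lt_of_lt_of_le (by positivity) hal
    set l := σ (i+1) * (a (i+1)) ^ 2 with hldef
    have hl0 : 0 < l := by positivity
    have hll : c₁ ^ (3:ℝ) * k ^ (-(1 + 2*ε + 2*p)) ≤ l := by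
      have h1 : (c₁ * k ^ (-p)) ^ 2 ≤ (a (i+1)) ^ 2 :=
        pow_le_pow_left₀ (by positivity) hal 2
      have h2 : (c₁ * k ^ (-1 - 2*ε)) * (c₁ * k ^ (-p)) ^ 2 ≤ l :=
        mul_le_mul hσl h1 (by positivity) hσpos.le
      refine le_trans (le_of_eq ?_) h2
      rw [mul_pow, ← Real.rpow_natCast (k ^ (-p)) 2, ← Real.rpow_mul hk0.le,
        ← Real.rpow_natCast c₁ 2,
        show (3:ℝ) = 1 + ((2:ℕ):ℝ) by norm_num, Real.rpow_add hc₁, Real.rpow_one]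
      rw [show -(1 + 2*ε + 2*p) = (-1 - 2*ε) + (-p * ((2:ℕ):ℝ)) by push_cast; ring,
        Real.rpow_add hk0]
      ring
    set q := qFun n α l with hq
    have hq0 : 0 ≤ q := qFun_nonneg hα hl0
    set x := P * l⁻¹ with hx
    have hx0 : 0 < x := by positivity
    have hPq0 : 0 ≤ P * q := by positivity
    have hPq : P * q ≤ min x 1 := by
      apply le_min
      · have h1 : l * q ≤ 1 := qFun_mul_le_one hα hl0
        have h2 : q ≤ l⁻¹ := by
          have h3 := mul_le_mul_of_nonneg_left h1 (inv_nonneg.mpr hl0.le)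
          rwa [← mul_assoc, inv_mul_cancel₀ hl0.ne', one_mul, mul_one] at h3
        calc P * q ≤ P * l⁻¹ := mul_le_mul_of_nonneg_left h2 hP0.le
        _ = x := rfl
      · have h1 : l * q ≤ (n:ℝ) * l / α := qFun_mul_le_n hα hl0
        have h2 : q ≤ (n:ℝ) / α := by
          have h3 := mul_le_mul_of_nonneg_left h1 (inv_nonneg.mpr hl0.le)
          rw [← mul_assoc, inv_mul_cancel₀ hl0.ne', one_mul] at h3
          calc q ≤ l⁻¹ * ((n:ℝ) * l / α) := h3
          _ = (n:ℝ) / α := by field_simp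
        calc P * q ≤ P * ((n:ℝ)/α) := mul_le_mul_of_nonneg_left h2 hP0.le
        _ = 1 := by rw [hP]; field_simp
    have hsq : (P * q) ^ 2 ≤ x ^ ρ :=
      le_trans (pow_le_pow_left₀ hPq0 hPq 2) (minpow x ρ hx0 hρ0 hρ2)
    -- bound σ^t
    have hσt : (σ (i+1)) ^ t ≤ c₂ ^ t * k ^ (-(t * (1 + 2*ε))) := by
      have h1 : (σ (i+1)) ^ t ≤ (c₂ * k ^ (-1 - 2*ε)) ^ t :=
        Real.rpow_le_rpow hσpos.le hσu ht
      refine le_trans h1 (le_of_eq ?_)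
      rw [Real.mul_rpow hc₂.le (by positivity), ← Real.rpow_mul hk0.le]
      congr 1
      ring
    have hσt0 : 0 ≤ (σ (i+1)) ^ t := Real.rpow_nonneg hσpos.le t
    -- x^ρ = P^ρ * l^{-ρ}
    have hxρ : x ^ ρ = P ^ ρ * l ^ (-ρ) := by
      rw [hx, Real.mul_rpow hP0.le (by positivity), ← Real.rpow_neg_one l,
        ← Real.rpow_mul hl0.le]
      ring_nf
    -- l^{-ρ} bound
    have hlρ : l ^ (-ρ) ≤ (c₁ ^ (-(6:ℝ)) + 1) * k ^ (t * (1 + 2*ε) + 2*β) := by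
      have h1 : l ^ (-ρ) ≤ (c₁ ^ (3:ℝ) * k ^ (-(1 + 2*ε + 2*p))) ^ (-ρ) :=
        Real.rpow_le_rpow_of_nonpos (by positivity) hll (by linarith)
      refine le_trans h1 ?_
      rw [Real.mul_rpow (by positivity) (by positivity), ← Real.rpow_mul hc₁.le,
        ← Real.rpow_mul hk0.le]
      have he : -(1 + 2*ε + 2*p) * (-ρ) = t * (1 + 2*ε) + 2*β := by
        rw [← hρ]; ring
      rw [he]
      have h2 : c₁ ^ (3 * (-ρ)) ≤ c₁ ^ (-(6:ℝ)) + c₁ ^ (0:ℝ) :=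
        cpow_bound c₁ hc₁ _ _ _ (by linarith) (by linarith)
      rw [Real.rpow_zero] at h2
      exact mul_le_mul_of_nonneg_right h2 (by positivity)
    -- main per-term bound
    have hmain : P ^ 2 * f i ≤ Cb * P ^ ρ * w i := by
      have h1 : P ^ 2 * f i = (σ (i+1)) ^ t * (P * q) ^ 2 * (v0 (i+1)) ^ 2 := by
        rw [hf]; ring
      rw [h1]
      have hv2 : (0:ℝ) ≤ (v0 (i+1)) ^ 2 := sq_nonneg _
      have step1 : (σ (i+1)) ^ t * (P * q) ^ 2 * (v0 (i+1)) ^ 2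
          ≤ (c₂ ^ t * k ^ (-(t * (1 + 2*ε)))) *
            (P ^ ρ * ((c₁ ^ (-(6:ℝ)) + 1) * k ^ (t * (1 + 2*ε) + 2*β))) * (v0 (i+1)) ^ 2 := by
        apply mul_le_mul_of_nonneg_right _ hv2
        apply mul_le_mul hσt _ (by positivity) (by positivity)
        rw [hxρ] at hsq
        calc (P * q) ^ 2 ≤ P ^ ρ * l ^ (-ρ) := hsq
        _ ≤ P ^ ρ * ((c₁ ^ (-(6:ℝ)) + 1) * k ^ (t * (1 + 2*ε) + 2*β)) := by
            apply mul_le_mul_of_nonneg_left hlρ (by positivity)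
      refine le_trans step1 (le_of_eq ?_)
      have hkk : k ^ (-(t * (1 + 2*ε))) * k ^ (t * (1 + 2*ε) + 2*β) = k ^ (2*β) := by
        rw [← Real.rpow_add hk0]; congr 1; ring
      rw [hw, hCb]
      calc (c₂ ^ t * k ^ (-(t * (1 + 2*ε)))) *
            (P ^ ρ * ((c₁ ^ (-(6:ℝ)) + 1) * k ^ (t * (1 + 2*ε) + 2*β))) * (v0 (i+1)) ^ 2
          = c₂ ^ t * (c₁ ^ (-(6:ℝ)) + 1) * P ^ ρ *
            ((k ^ (-(t * (1 + 2*ε))) * k ^ (t * (1 + 2*ε) + 2*β)) * (v0 (i+1)) ^ 2) := by ring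
      _ = _ := by rw [hkk]
    constructor
    · rw [hf]
      have : (0:ℝ) ≤ (σ (i+1)) ^ t := hσt0
      positivity
    · have hP2 : (0:ℝ) < P ^ 2 := by positivity
      rw [hK]
      calc f i = (P ^ 2)⁻¹ * (P ^ 2 * f i) := by field_simp
      _ ≤ (P ^ 2)⁻¹ * (Cb * P ^ ρ * w i) := by
          apply mul_le_mul_of_nonneg_left hmain (by positivity)
      _ = (P ^ 2)⁻¹ * (Cb * P ^ ρ) * w i := by ring
  have hg : Summable (fun i => K * w i) := hv.mul_left K
  have hfs : Summable f := Summable.of_nonneg_of_le (fun i => (key i).1) (fun i => (key i).2) hg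
  have htsum : ∑' i, f i ≤ K * W := by
    calc ∑' i, f i ≤ ∑' i, K * w i := Summable.tsum_le_tsum (fun i => (key i).2) hfs hg
    _ = K * W := by rw [tsum_mul_left]
  have hW0 : 0 ≤ W := tsum_nonneg (fun i => by positivity)
  calc Bterm σ a v0 t α n = P ^ 2 * ∑' i, f i := rfl
  _ ≤ P ^ 2 * (K * W) := by
      apply mul_le_mul_of_nonneg_left htsum (by positivity)
  _ = Cb * W * P ^ ρ := by rw [hK]; field_simp

lemma var_bound (ε p t γ : ℝ) (hε : 0 < ε) (hp : 0 < p) (ht : 0 ≤ t) (hγ : 0 < γ)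
    (σ a : ℕ → ℝ) (c₁ c₂ : ℝ) (hc₁ : 0 < c₁) (hc₁₂ : c₁ ≤ c₂)
    (hσ : ∀ i : ℕ, 1 ≤ i → c₁ * (i : ℝ) ^ (-1 - 2 * ε) ≤ σ i ∧ σ i ≤ c₂ * (i : ℝ) ^ (-1 - 2 * ε))
    (ha : ∀ i : ℕ, 1 ≤ i → c₁ * (i : ℝ) ^ (-p) ≤ a i ∧ a i ≤ c₂ * (i : ℝ) ^ (-p))
    (κ δ : ℝ) (hκ0 : 0 ≤ κ) (hκ1 : κ ≤ 1) (hδ : 0 < δ)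
    (hκδ : -((1 + 2 * ε) * (t + 2)) - 2 * p + (1 + 2 * ε + 2 * p) * (2 - κ) = -(1 + δ))
    (α : ℝ) (hα : 0 < α) (n : ℕ) (hn : 1 ≤ n) :
    Vterm σ a t γ α n ≤
      (γ ^ 2 * (c₂ ^ (t + 2) * c₂ ^ 2 * (c₁ ^ (-(6:ℝ)) + c₁ ^ (-(3:ℝ)))) * (1 + δ⁻¹)) *
        ((n : ℝ) / α) ^ κ / n := by
  have hc₂ : 0 < c₂ := lt_of_lt_of_le hc₁ hc₁₂
  have hn0 : (0:ℝ) < n := by exact_mod_cast hn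
  set C6 := c₂ ^ (t + 2) * c₂ ^ 2 * (c₁ ^ (-(6:ℝ)) + c₁ ^ (-(3:ℝ))) with hC6
  have hC60 : 0 < C6 := by positivity
  set R := ((n : ℝ) / α) ^ κ with hR
  have hR0 : 0 < R := by positivity
  -- inner bound for each j
  have inner : ∀ j : ℕ, j ∈ Icc 1 n →
      (∑' i : ℕ, (σ (i + 1)) ^ (t + 2) * (a (i + 1)) ^ 2 *
        (qFun j α (σ (i + 1) * (a (i + 1)) ^ 2)) ^ 2) ≤ C6 * (1 + δ⁻¹) * R := by
    intro j hj
    rw [Finset.mem_Icc] at hj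
    have hj0 : (0:ℝ) < j := by exact_mod_cast hj.1
    have hjn : (j:ℝ) ≤ n := by exact_mod_cast hj.2
    set J := (j:ℝ) / α with hJ
    have hJ0 : 0 < J := by positivity
    have key : ∀ i : ℕ,
        0 ≤ (σ (i + 1)) ^ (t + 2) * (a (i + 1)) ^ 2 *
              (qFun j α (σ (i + 1) * (a (i + 1)) ^ 2)) ^ 2 ∧
        (σ (i + 1)) ^ (t + 2) * (a (i + 1)) ^ 2 *
              (qFun j α (σ (i + 1) * (a (i + 1)) ^ 2)) ^ 2
          ≤ (C6 * J ^ κ) * ((i:ℝ) + 1) ^ (-(1 + δ)) := by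
      intro i
      set k := ((i:ℝ) + 1) with hkdef
      have hk1 : (1:ℝ) ≤ k := by
        rw [hkdef]; have : (0:ℝ) ≤ (i:ℝ) := Nat.cast_nonneg i; linarith
      have hk0 : (0:ℝ) < k := by linarith
      have hcast : ((i + 1 : ℕ) : ℝ) = k := by rw [hkdef]; push_cast; ring
      obtain ⟨hσl, hσu⟩ := hσ (i+1) (by omega)
      obtain ⟨hal, hau⟩ := ha (i+1) (by omega)
      rw [hcast] at hσl hσu hal hau
      have hσpos : 0 < σ (i+1) := lt_of_lt_of_le (by positivity) hσl
      have hapos : 0 < a (i+1) := lt_of_lt_of_le (by positivity) hal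
      set l := σ (i+1) * (a (i+1)) ^ 2 with hldef
      have hl0 : 0 < l := by positivity
      have hll : c₁ ^ (3:ℝ) * k ^ (-(1 + 2*ε + 2*p)) ≤ l := by
        have h1 : (c₁ * k ^ (-p)) ^ 2 ≤ (a (i+1)) ^ 2 :=
          pow_le_pow_left₀ (by positivity) hal 2
        have h2 : (c₁ * k ^ (-1 - 2*ε)) * (c₁ * k ^ (-p)) ^ 2 ≤ l :=
          mul_le_mul hσl h1 (by positivity) hσpos.le
        refine le_trans (le_of_eq ?_) h2
        rw [mul_pow, ← Real.rpow_natCast (k ^ (-p)) 2, ← Real.rpow_mul hk0.le,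
          ← Real.rpow_natCast c₁ 2,
          show (3:ℝ) = 1 + ((2:ℕ):ℝ) by norm_num, Real.rpow_add hc₁, Real.rpow_one]
        rw [show -(1 + 2*ε + 2*p) = (-1 - 2*ε) + (-p * ((2:ℕ):ℝ)) by push_cast; ring,
          Real.rpow_add hk0]
        ring
      set q := qFun j α l with hq
      have hq0 : 0 ≤ q := qFun_nonneg hα hl0
      set x := J * l with hx
      have hx0 : 0 < x := by positivity
      have hlq : l * q ≤ min x 1 := by
        apply le_min
        · have h1 : l * q ≤ (j:ℝ) * l / α := qFun_mul_le_n hα hl0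
          calc l * q ≤ (j:ℝ) * l / α := h1
          _ = x := by rw [hx, hJ]; ring
        · exact qFun_mul_le_one hα hl0
      have hsq : (l * q) ^ 2 ≤ x ^ κ :=
        le_trans (pow_le_pow_left₀ (by positivity) hlq 2)
          (minpow x κ hx0 hκ0 (by linarith))
      have hq2 : q ^ 2 ≤ x ^ κ / l ^ 2 := by
        rw [le_div_iff₀ (by positivity)]
        calc q ^ 2 * l ^ 2 = (l * q) ^ 2 := by ring
        _ ≤ x ^ κ := hsq
      -- σ^{t+2} bound
      have hσt : (σ (i+1)) ^ (t + 2) ≤ c₂ ^ (t + 2) * k ^ (-((1 + 2*ε) * (t + 2))) := by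
        have h1 : (σ (i+1)) ^ (t + 2) ≤ (c₂ * k ^ (-1 - 2*ε)) ^ (t + 2) :=
          Real.rpow_le_rpow hσpos.le hσu (by linarith)
        refine le_trans h1 (le_of_eq ?_)
        rw [Real.mul_rpow hc₂.le (by positivity), ← Real.rpow_mul hk0.le]
        congr 1
        ring
      have ha2 : (a (i+1)) ^ 2 ≤ c₂ ^ 2 * k ^ (-(2 * p)) := by
        have h1 : (a (i+1)) ^ 2 ≤ (c₂ * k ^ (-p)) ^ 2 := pow_le_pow_left₀ hapos.le hau 2
        refine le_trans h1 (le_of_eq ?_)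
        rw [mul_pow, ← Real.rpow_natCast (k ^ (-p)) 2, ← Real.rpow_mul hk0.le,
          show (-p) * ((2:ℕ):ℝ) = -(2*p) by push_cast; ring]
      -- x^κ / l² = J^κ * l^{κ-2}
      have hxl : x ^ κ / l ^ 2 = J ^ κ * l ^ (κ - 2) := by
        rw [hx, Real.mul_rpow hJ0.le hl0.le, Real.rpow_sub hl0,
          ← Real.rpow_natCast l 2]
        push_cast
        ring
      have hlκ : l ^ (κ - 2) ≤ (c₁ ^ (-(6:ℝ)) + c₁ ^ (-(3:ℝ))) *
          k ^ ((1 + 2*ε + 2*p) * (2 - κ)) := by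
        have h1 : l ^ (κ - 2) ≤ (c₁ ^ (3:ℝ) * k ^ (-(1 + 2*ε + 2*p))) ^ (κ - 2) :=
          Real.rpow_le_rpow_of_nonpos (by positivity) hll (by linarith)
        refine le_trans h1 ?_
        rw [Real.mul_rpow (by positivity) (by positivity), ← Real.rpow_mul hc₁.le,
          ← Real.rpow_mul hk0.le]
        rw [show -(1 + 2*ε + 2*p) * (κ - 2) = (1 + 2*ε + 2*p) * (2 - κ) by ring]
        have h2 : c₁ ^ (3 * (κ - 2)) ≤ c₁ ^ (-(6:ℝ)) + c₁ ^ (-(3:ℝ)) :=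
          cpow_bound c₁ hc₁ _ _ _ (by linarith) (by linarith)
        exact mul_le_mul_of_nonneg_right h2 (by positivity)
      have hσt0 : 0 ≤ (σ (i+1)) ^ (t+2) := Real.rpow_nonneg hσpos.le _
      constructor
      · positivity
      · have step1 : (σ (i + 1)) ^ (t + 2) * (a (i + 1)) ^ 2 * q ^ 2
            ≤ (c₂ ^ (t + 2) * k ^ (-((1 + 2*ε) * (t + 2)))) *
              (c₂ ^ 2 * k ^ (-(2 * p))) *
              (J ^ κ * ((c₁ ^ (-(6:ℝ)) + c₁ ^ (-(3:ℝ))) *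
                k ^ ((1 + 2*ε + 2*p) * (2 - κ)))) := by
          have hq2' : q ^ 2 ≤ J ^ κ * ((c₁ ^ (-(6:ℝ)) + c₁ ^ (-(3:ℝ))) *
              k ^ ((1 + 2*ε + 2*p) * (2 - κ))) := by
            calc q ^ 2 ≤ x ^ κ / l ^ 2 := hq2
            _ = J ^ κ * l ^ (κ - 2) := hxl
            _ ≤ _ := mul_le_mul_of_nonneg_left hlκ (by positivity)
          apply mul_le_mul (mul_le_mul hσt ha2 (by positivity) (by positivity)) hq2'
            (by positivity) (by positivity)
        refine le_trans step1 (le_of_eq ?_)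
        have hkk : k ^ (-((1 + 2*ε) * (t + 2))) * k ^ (-(2 * p)) *
            k ^ ((1 + 2*ε + 2*p) * (2 - κ)) = k ^ (-(1 + δ)) := by
          rw [← Real.rpow_add hk0, ← Real.rpow_add hk0]
          rw [show -((1 + 2*ε) * (t + 2)) + -(2 * p) + (1 + 2*ε + 2*p) * (2 - κ)
            = -((1 + 2 * ε) * (t + 2)) - 2 * p + (1 + 2 * ε + 2 * p) * (2 - κ) by ring, hκδ]
        calc (c₂ ^ (t + 2) * k ^ (-((1 + 2*ε) * (t + 2)))) * (c₂ ^ 2 * k ^ (-(2 * p))) *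
              (J ^ κ * ((c₁ ^ (-(6:ℝ)) + c₁ ^ (-(3:ℝ))) * k ^ ((1 + 2*ε + 2*p) * (2 - κ))))
            = (C6 * J ^ κ) * (k ^ (-((1 + 2*ε) * (t + 2))) * k ^ (-(2 * p)) *
              k ^ ((1 + 2*ε + 2*p) * (2 - κ))) := by rw [hC6]; ring
        _ = (C6 * J ^ κ) * k ^ (-(1 + δ)) := by rw [hkk]
    -- sum the inner bound
    have hgsum : Summable (fun i : ℕ => (C6 * J ^ κ) * ((i:ℝ) + 1) ^ (-(1 + δ))) :=
      (zeta_summable δ hδ).mul_left _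
    have hfs : Summable (fun i : ℕ => (σ (i + 1)) ^ (t + 2) * (a (i + 1)) ^ 2 *
        (qFun j α (σ (i + 1) * (a (i + 1)) ^ 2)) ^ 2) :=
      Summable.of_nonneg_of_le (fun i => (key i).1) (fun i => (key i).2) hgsum
    calc (∑' i : ℕ, (σ (i + 1)) ^ (t + 2) * (a (i + 1)) ^ 2 *
          (qFun j α (σ (i + 1) * (a (i + 1)) ^ 2)) ^ 2)
        ≤ ∑' i : ℕ, (C6 * J ^ κ) * ((i:ℝ) + 1) ^ (-(1 + δ)) :=
          Summable.tsum_le_tsum (fun i => (key i).2) hfs hgsum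
    _ = (C6 * J ^ κ) * ∑' i : ℕ, ((i:ℝ) + 1) ^ (-(1 + δ)) := tsum_mul_left
    _ ≤ (C6 * J ^ κ) * (1 + δ⁻¹) := by
        apply mul_le_mul_of_nonneg_left (zeta_tsum_le δ hδ) (by positivity)
    _ ≤ (C6 * R) * (1 + δ⁻¹) := by
        have hJR : J ^ κ ≤ R := by
          rw [hR, hJ]
          apply Real.rpow_le_rpow (by positivity) _ hκ0
          gcongr
        have h1 : (0:ℝ) ≤ 1 + δ⁻¹ := by positivity
        have h2 : C6 * J ^ κ ≤ C6 * R := mul_le_mul_of_nonneg_left hJR hC60.le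
        exact mul_le_mul_of_nonneg_right h2 h1
    _ = C6 * (1 + δ⁻¹) * R := by ring
  -- sum over j
  have houter : (∑ j ∈ Icc 1 n, ∑' i : ℕ,
      (σ (i + 1)) ^ (t + 2) * (a (i + 1)) ^ 2 *
        (qFun j α (σ (i + 1) * (a (i + 1)) ^ 2)) ^ 2) ≤ (n:ℝ) * (C6 * (1 + δ⁻¹) * R) := by
    calc (∑ j ∈ Icc 1 n, ∑' i : ℕ,
        (σ (i + 1)) ^ (t + 2) * (a (i + 1)) ^ 2 *
          (qFun j α (σ (i + 1) * (a (i + 1)) ^ 2)) ^ 2)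
        ≤ ∑ j ∈ Icc 1 n, (C6 * (1 + δ⁻¹) * R) := Finset.sum_le_sum inner
    _ = (n:ℝ) * (C6 * (1 + δ⁻¹) * R) := by
        rw [Finset.sum_const, Nat.card_Icc]
        simp [nsmul_eq_mul]
  calc Vterm σ a t γ α n
      ≤ (γ ^ 2 / (n : ℝ) ^ 2) * ((n:ℝ) * (C6 * (1 + δ⁻¹) * R)) := by
        rw [Vterm]
        apply mul_le_mul_of_nonneg_left houter (by positivity)
  _ = (γ ^ 2 * C6 * (1 + δ⁻¹)) * R / n := by field_simp

end AuxHelpers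

/-- Minimax rate for iterate-averaged 3DVAR in the diagonal case (first regime
`τ̄_b ≤ 1`, `τ̄_v ≤ 1`): with the optimally scaled
`α = θ^{−(1+2p+2ε)/(1+2p+2β+θ(t(1+2ε)+2ε))} n^{(2β−2ε+θ(t(1+2ε)+2ε))/(1+2p+2β+θ(t(1+2ε)+2ε))}`,
one has `B_n(α)+V_n(α) ≤ C θ^{−(2β+t(1+2ε))/(1+2p+2β+θ(t(1+2ε)+2ε))}
n^{−(t(1+2ε)+2β)/(1+2p+2β+θ(t(1+2ε)+2ε))}` with `C` independent of `θ` and `n`. -/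

theorem diagonal_minimax_first_regime
    (ε p t β γ : ℝ) (hε : 0 < ε) (hp : 0 < p) (ht : 0 ≤ t) (hβ : 0 ≤ β) (hγ : 0 < γ)
    (σ a v0 : ℕ → ℝ) (c₁ c₂ : ℝ) (hc₁ : 0 < c₁) (hc₁₂ : c₁ ≤ c₂)
    (hσ : ∀ i : ℕ, 1 ≤ i → c₁ * (i : ℝ) ^ (-1 - 2 * ε) ≤ σ i ∧ σ i ≤ c₂ * (i : ℝ) ^ (-1 - 2 * ε))
    (ha : ∀ i : ℕ, 1 ≤ i → c₁ * (i : ℝ) ^ (-p) ≤ a i ∧ a i ≤ c₂ * (i : ℝ) ^ (-p))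
    (hv : Summable (fun i : ℕ => ((i : ℝ) + 1) ^ (2 * β) * (v0 (i + 1)) ^ 2))
    (hτb : (t * (1 + 2 * ε) + 2 * β) / (2 * (1 + 2 * ε + 2 * p)) ≤ 1)
    (hτv : (t * (1 + 2 * ε) + 2 * ε) / (1 + 2 * ε + 2 * p) ≤ 1) :
    ∃ C : ℝ, 0 < C ∧ ∀ θ : ℝ, θ ∈ Set.Ioc (0:ℝ) 1 → ∀ n : ℕ, 1 ≤ n →
      Bterm σ a v0 t
          (θ ^ (-(1 + 2 * p + 2 * ε) / (1 + 2 * p + 2 * β + θ * (t * (1 + 2 * ε) + 2 * ε))) *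
            (n : ℝ) ^ ((2 * β - 2 * ε + θ * (t * (1 + 2 * ε) + 2 * ε)) /
              (1 + 2 * p + 2 * β + θ * (t * (1 + 2 * ε) + 2 * ε)))) n +
        Vterm σ a t γ
          (θ ^ (-(1 + 2 * p + 2 * ε) / (1 + 2 * p + 2 * β + θ * (t * (1 + 2 * ε) + 2 * ε))) *
            (n : ℝ) ^ ((2 * β - 2 * ε + θ * (t * (1 + 2 * ε) + 2 * ε)) /
              (1 + 2 * p + 2 * β + θ * (t * (1 + 2 * ε) + 2 * ε)))) n ≤
        C * θ ^ (-(2 * β + t * (1 + 2 * ε)) /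
            (1 + 2 * p + 2 * β + θ * (t * (1 + 2 * ε) + 2 * ε))) *
          (n : ℝ) ^ (-(t * (1 + 2 * ε) + 2 * β) /
            (1 + 2 * p + 2 * β + θ * (t * (1 + 2 * ε) + 2 * ε))) := by
  have hc₂ : 0 < c₂ := lt_of_lt_of_le hc₁ hc₁₂
  have hW0 : 0 ≤ ∑' i : ℕ, ((i : ℝ) + 1) ^ (2 * β) * (v0 (i + 1)) ^ 2 :=
    tsum_nonneg (fun i => by positivity)
  have hT0 : 0 ≤ t * (1 + 2 * ε) := by nlinarith
  have hTε : 0 < t * (1 + 2 * ε) + 2 * ε := by nlinarith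
  have hs0 : (0:ℝ) < 1 + 2 * ε + 2 * p := by linarith
  refine ⟨c₂ ^ t * (c₁ ^ (-(6:ℝ)) + 1) *
      (∑' i : ℕ, ((i : ℝ) + 1) ^ (2 * β) * (v0 (i + 1)) ^ 2) +
    γ ^ 2 * (c₂ ^ (t + 2) * c₂ ^ 2 * (c₁ ^ (-(6:ℝ)) + c₁ ^ (-(3:ℝ)))) *
      (1 + (t * (1 + 2 * ε) + 2 * ε)⁻¹) + 1, by positivity, ?_⟩
  rintro θ ⟨hθ0, hθ1⟩ n hn
  have hn0 : (0:ℝ) < n := by exact_mod_cast hn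
  have hD0 : (0:ℝ) < 1 + 2 * p + 2 * β + θ * (t * (1 + 2 * ε) + 2 * ε) := by nlinarith
  set δ := θ * (t * (1 + 2 * ε) + 2 * ε) with hδdef
  set D := 1 + 2 * p + 2 * β + δ with hDdef
  set A := θ ^ (-(1 + 2 * p + 2 * ε) / D) * (n : ℝ) ^ ((2 * β - 2 * ε + δ) / D) with hAdef
  have hδ0 : 0 < δ := by rw [hδdef]; positivity
  have hA0 : 0 < A := mul_pos (Real.rpow_pos_of_pos hθ0 _) (Real.rpow_pos_of_pos hn0 _)
  have hDexp : D = 1 + 2 * p + 2 * β + θ * (t * (1 + 2 * ε) + 2 * ε) := by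
    rw [hDdef, hδdef]
  set ρ := (t * (1 + 2 * ε) + 2 * β) / (1 + 2 * ε + 2 * p) with hρdef
  set κ := 1 - (1 - θ) * (t * (1 + 2 * ε) + 2 * ε) / (1 + 2 * ε + 2 * p) with hκdef
  have hρ0 : 0 ≤ ρ := by rw [hρdef]; positivity
  have hρ2 : ρ ≤ 2 := by
    rw [hρdef, div_le_iff₀ hs0]
    rw [div_le_one (by positivity)] at hτb
    linarith
  have hρeq : (1 + 2 * ε + 2 * p) * ρ = t * (1 + 2 * ε) + 2 * β := by
    rw [hρdef]; field_simp
  have hu1 : t * (1 + 2 * ε) + 2 * ε ≤ 1 + 2 * ε + 2 * p := by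
    rw [div_le_one hs0] at hτv; linarith
  have hκ0 : 0 ≤ κ := by
    rw [hκdef, sub_nonneg, div_le_one hs0]
    nlinarith
  have hκ1 : κ ≤ 1 := by
    rw [hκdef]
    have : 0 ≤ (1 - θ) * (t * (1 + 2 * ε) + 2 * ε) / (1 + 2 * ε + 2 * p) :=
      div_nonneg (mul_nonneg (by linarith) hTε.le) hs0.le
    linarith
  have hsκ : (1 + 2 * ε + 2 * p) * κ
      = (1 + 2 * ε + 2 * p) - (1 - θ) * (t * (1 + 2 * ε) + 2 * ε) := by
    rw [hκdef]; field_simp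
  have hκδ : -((1 + 2 * ε) * (t + 2)) - 2 * p + (1 + 2 * ε + 2 * p) * (2 - κ) = -(1 + δ) := by
    have h1 : (1 + 2 * ε + 2 * p) * (2 - κ)
        = (1 + 2 * ε + 2 * p) + (1 - θ) * (t * (1 + 2 * ε) + 2 * ε) := by
      linear_combination -hsκ
    rw [h1, hδdef]; ring
  -- the two bounds
  have hB := bias_bound ε p t β hε hp ht hβ σ a v0 c₁ c₂ hc₁ hc₁₂ hσ ha hv
    ρ hρ0 hρ2 hρeq A hA0 n hn
  have hV := var_bound ε p t γ hε hp ht hγ σ a c₁ c₂ hc₁ hc₁₂ hσ ha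
    κ δ hκ0 hκ1 hδ0 hκδ A hA0 n hn
  -- rpow algebra
  have hAn : A / (n:ℝ) = θ ^ (-(1 + 2 * p + 2 * ε) / D) * (n:ℝ) ^ (-(1 + 2 * p + 2 * ε) / D) := by
    have hb : (2 * β - 2 * ε + δ) / D - 1 = -(1 + 2 * p + 2 * ε) / D := by
      field_simp
      linear_combination hDexp - hδdef
    calc A / (n:ℝ) = θ ^ (-(1 + 2 * p + 2 * ε) / D) *
          ((n:ℝ) ^ ((2 * β - 2 * ε + δ) / D) / (n:ℝ) ^ (1:ℝ)) := by
          rw [Real.rpow_one, hAdef]; ring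
    _ = θ ^ (-(1 + 2 * p + 2 * ε) / D) * (n:ℝ) ^ ((2 * β - 2 * ε + δ) / D - 1) := by
        rw [← Real.rpow_sub hn0]
    _ = _ := by rw [hb]
  have hApow : (A / (n:ℝ)) ^ ρ = θ ^ (-(2 * β + t * (1 + 2 * ε)) / D) *
      (n:ℝ) ^ (-(t * (1 + 2 * ε) + 2 * β) / D) := by
    have he1 : -(1 + 2 * p + 2 * ε) / D * ρ = -(2 * β + t * (1 + 2 * ε)) / D := by
      field_simp
      linear_combination -hρeq
    have he2 : -(1 + 2 * p + 2 * ε) / D * ρ = -(t * (1 + 2 * ε) + 2 * β) / D := by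
      field_simp
      linear_combination -hρeq
    rw [hAn, Real.mul_rpow (by positivity) (by positivity),
      ← Real.rpow_mul hθ0.le, ← Real.rpow_mul hn0.le, he1]
    congr 1
    congr 1
    ring
  have hNA : (n:ℝ) / A = θ ^ ((1 + 2 * p + 2 * ε) / D) * (n:ℝ) ^ ((1 + 2 * p + 2 * ε) / D) := by
    have h1 : (n:ℝ) / A = (A / (n:ℝ))⁻¹ := by rw [inv_div]
    rw [h1, hAn, mul_inv, ← Real.rpow_neg hθ0.le, ← Real.rpow_neg hn0.le]
    congr 1
    · congr 1; ring
    · congr 1; ring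
  have hVpow : ((n:ℝ) / A) ^ κ / (n:ℝ) = θ * (θ ^ (-(2 * β + t * (1 + 2 * ε)) / D) *
      (n:ℝ) ^ (-(t * (1 + 2 * ε) + 2 * β) / D)) := by
    have he3 : (1 + 2 * p + 2 * ε) / D * κ - 1 = -(t * (1 + 2 * ε) + 2 * β) / D := by
      field_simp
      linear_combination hsκ - hDexp + hδdef
    have he4 : (1 + 2 * p + 2 * ε) / D * κ = 1 + -(2 * β + t * (1 + 2 * ε)) / D := by
      field_simp
      linear_combination hsκ - hDexp + hδdef
    calc ((n:ℝ) / A) ^ κ / (n:ℝ)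
        = θ ^ ((1 + 2 * p + 2 * ε) / D * κ) *
          ((n:ℝ) ^ ((1 + 2 * p + 2 * ε) / D * κ) / (n:ℝ) ^ (1:ℝ)) := by
          rw [hNA, Real.mul_rpow (by positivity) (by positivity),
            ← Real.rpow_mul hθ0.le, ← Real.rpow_mul hn0.le, Real.rpow_one]
          ring
    _ = θ ^ ((1 + 2 * p + 2 * ε) / D * κ) *
          (n:ℝ) ^ ((1 + 2 * p + 2 * ε) / D * κ - 1) := by rw [← Real.rpow_sub hn0]
    _ = _ := by
        rw [he3, he4, Real.rpow_add hθ0, Real.rpow_one]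
        ring
  -- combine
  set X := θ ^ (-(2 * β + t * (1 + 2 * ε)) / D) * (n:ℝ) ^ (-(t * (1 + 2 * ε) + 2 * β) / D)
    with hXdef
  have hX0 : 0 < X := mul_pos (Real.rpow_pos_of_pos hθ0 _) (Real.rpow_pos_of_pos hn0 _)
  have hBfin : Bterm σ a v0 t A n ≤ c₂ ^ t * (c₁ ^ (-(6:ℝ)) + 1) *
      (∑' i : ℕ, ((i : ℝ) + 1) ^ (2 * β) * (v0 (i + 1)) ^ 2) * X := by
    rw [← hApow]
    exact hB
  have hVfin : Vterm σ a t γ A n ≤ γ ^ 2 * (c₂ ^ (t + 2) * c₂ ^ 2 *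
      (c₁ ^ (-(6:ℝ)) + c₁ ^ (-(3:ℝ)))) * (1 + (t * (1 + 2 * ε) + 2 * ε)⁻¹) * X := by
    have hθδ : (1 + δ⁻¹) * θ ≤ 1 + (t * (1 + 2 * ε) + 2 * ε)⁻¹ := by
      have heq : δ⁻¹ * θ = (t * (1 + 2 * ε) + 2 * ε)⁻¹ := by
        rw [hδdef, mul_inv]
        field_simp
      nlinarith [inv_nonneg.mpr hTε.le, heq]
    calc Vterm σ a t γ A n
        ≤ γ ^ 2 * (c₂ ^ (t + 2) * c₂ ^ 2 * (c₁ ^ (-(6:ℝ)) + c₁ ^ (-(3:ℝ)))) * (1 + δ⁻¹) *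
          ((n : ℝ) / A) ^ κ / ↑n := hV
    _ = γ ^ 2 * (c₂ ^ (t + 2) * c₂ ^ 2 * (c₁ ^ (-(6:ℝ)) + c₁ ^ (-(3:ℝ)))) *
          ((1 + δ⁻¹) * (((n : ℝ) / A) ^ κ / ↑n)) := by ring
    _ = γ ^ 2 * (c₂ ^ (t + 2) * c₂ ^ 2 * (c₁ ^ (-(6:ℝ)) + c₁ ^ (-(3:ℝ)))) *
          (((1 + δ⁻¹) * θ) * X) := by rw [hVpow]; ring
    _ ≤ _ := by
        have hc : (0:ℝ) ≤ γ ^ 2 * (c₂ ^ (t + 2) * c₂ ^ 2 *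
            (c₁ ^ (-(6:ℝ)) + c₁ ^ (-(3:ℝ)))) := by positivity
        have h2 : ((1 + δ⁻¹) * θ) * X ≤ (1 + (t * (1 + 2 * ε) + 2 * ε)⁻¹) * X :=
          mul_le_mul_of_nonneg_right hθδ hX0.le
        calc γ ^ 2 * (c₂ ^ (t + 2) * c₂ ^ 2 * (c₁ ^ (-(6:ℝ)) + c₁ ^ (-(3:ℝ)))) *
              (((1 + δ⁻¹) * θ) * X)
            ≤ γ ^ 2 * (c₂ ^ (t + 2) * c₂ ^ 2 * (c₁ ^ (-(6:ℝ)) + c₁ ^ (-(3:ℝ)))) *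
              ((1 + (t * (1 + 2 * ε) + 2 * ε)⁻¹) * X) := mul_le_mul_of_nonneg_left h2 hc
        _ = _ := by ring
  calc Bterm σ a v0 t A n + Vterm σ a t γ A n
      ≤ (c₂ ^ t * (c₁ ^ (-(6:ℝ)) + 1) *
          (∑' i : ℕ, ((i : ℝ) + 1) ^ (2 * β) * (v0 (i + 1)) ^ 2) +
        γ ^ 2 * (c₂ ^ (t + 2) * c₂ ^ 2 * (c₁ ^ (-(6:ℝ)) + c₁ ^ (-(3:ℝ)))) *
          (1 + (t * (1 + 2 * ε) + 2 * ε)⁻¹)) * X := by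
        rw [add_mul]; exact add_le_add hBfin hVfin
  _ ≤ (c₂ ^ t * (c₁ ^ (-(6:ℝ)) + 1) *
          (∑' i : ℕ, ((i : ℝ) + 1) ^ (2 * β) * (v0 (i + 1)) ^ 2) +
        γ ^ 2 * (c₂ ^ (t + 2) * c₂ ^ 2 * (c₁ ^ (-(6:ℝ)) + c₁ ^ (-(3:ℝ)))) *
          (1 + (t * (1 + 2 * ε) + 2 * ε)⁻¹) + 1) * X := by
        apply mul_le_mul_of_nonneg_right _ hX0.le
        linarith
  _ = _ := by rw [hXdef]; ring
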